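/- Let F be a field, K a positive integer, S, T ⊆ {1,…,K} with |S| = |T|, and B ∈ F^{S×K}. If the matrix formed by stacking B and the standard basis rows e_k, k ∈ K∖T, has rank K, then there exists a bijection σ : S → T such that B_{j,σ(j)} ≠ 0 for all j ∈ S. -/

import Mathlib

theorem stmt_2 (F : Type*) [Field F] (K : ℕ) (hK : 0 < K)
    (S T : Finset (Fin K)) (hST : S.card = T.card)
    (B : Matrix {k : Fin K // k ∈ S} (Fin K) F)
    (hrank : (Matrix.of (Sum.elim (fun s : {k : Fin K // k ∈ S} => B s)
        (fun k : {k : Fin K // k ∉ T} => fun c : Fin K => if c = k.1 then (1 : F) else 0))).rank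
      = K) :
    ∃ σ : {k : Fin K // k ∈ S} ≃ {k : Fin K // k ∈ T},
      ∀ j : {k : Fin K // k ∈ S}, B j ((σ j : {k : Fin K // k ∈ T}) : Fin K) ≠ 0 := by
  classical
  set M : Matrix ({k : Fin K // k ∈ S} ⊕ {k : Fin K // k ∉ T}) (Fin K) F :=
    Matrix.of (Sum.elim (fun s : {k : Fin K // k ∈ S} => B s)
        (fun k : {k : Fin K // k ∉ T} => fun c : Fin K => if c = k.1 then (1 : F) else 0))
    with hM
  have hcardS : Fintype.card {k : Fin K // k ∈ S} = S.card := Fintype.card_coe S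
  have hcardT : Fintype.card {k : Fin K // k ∈ T} = T.card := Fintype.card_coe T
  have hTle : T.card ≤ K := by
    simpa using Finset.card_le_univ T
  have hcardTc : Fintype.card {k : Fin K // k ∉ T} = K - T.card := by
    have := Fintype.card_subtype_compl (fun k : Fin K => k ∈ T)
    simpa [hcardT] using this
  have hcardSum : Fintype.card ({k : Fin K // k ∈ S} ⊕ {k : Fin K // k ∉ T}) = K := by
    rw [Fintype.card_sum, hcardS, hcardTc, hST]
    omega
  -- rows of M are linearly independent
  have hLI : LinearIndependent F (fun i => M i) := by
    apply linearIndependent_iff_card_eq_finrank_span.mpr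
    rw [hcardSum, Set.finrank]
    exact hrank.symm.trans (Matrix.rank_eq_finrank_span_row M)
  have hLI' := Fintype.linearIndependent_iff.mp hLI
  -- the equiv between S and T
  let eST : {k : Fin K // k ∈ S} ≃ {k : Fin K // k ∈ T} :=
    Fintype.equivOfCardEq (by rw [hcardS, hcardT, hST])
  -- square submatrix
  let D : Matrix {k : Fin K // k ∈ S} {k : Fin K // k ∈ S} F :=
    fun i j => B i ((eST j : {k : Fin K // k ∈ T}) : Fin K)
  have hdet : D.det ≠ 0 := by
    intro hd
    obtain ⟨v, hv0, hvD⟩ := (Matrix.exists_vecMul_eq_zero_iff).mpr hd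
    -- v ᵥ* D = 0 means columns in T are killed
    have hT : ∀ t : {k : Fin K // k ∈ T}, ∑ i, v i * B i (t : Fin K) = 0 := by
      intro t
      have := congrFun hvD (eST.symm t)
      simpa [Matrix.vecMul, dotProduct, D] using this
    -- build vector on the sum type
    set u : ({k : Fin K // k ∈ S} ⊕ {k : Fin K // k ∉ T}) → F :=
      Sum.elim v (fun k => -∑ i, v i * B i (k : Fin K)) with hu
    have hsum : ∀ c : Fin K, ∑ p, u p • M p c = 0 := by
      intro c
      rw [Fintype.sum_sum_type]
      by_cases hc : c ∈ T
      · have h1 : ∑ i : {k : Fin K // k ∈ S}, u (Sum.inl i) • M (Sum.inl i) c = 0 := by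
          simpa [hu, hM, smul_eq_mul] using hT ⟨c, hc⟩
        have h2 : ∑ k : {k : Fin K // k ∉ T}, u (Sum.inr k) • M (Sum.inr k) c = 0 := by
          apply Finset.sum_eq_zero
          intro k _
          have : ¬ c = (k : Fin K) := by
            rintro rfl; exact k.2 hc
          simp [hM, this]
        rw [h1, h2, add_zero]
      · have h1 : ∑ i : {k : Fin K // k ∈ S}, u (Sum.inl i) • M (Sum.inl i) c
            = ∑ i, v i * B i c := by
          simp [hu, hM, smul_eq_mul]
        have h2 : ∑ k : {k : Fin K // k ∉ T}, u (Sum.inr k) • M (Sum.inr k) c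
            = -∑ i, v i * B i c := by
          rw [Finset.sum_eq_single (⟨c, hc⟩ : {k : Fin K // k ∉ T})]
          · simp [hu, hM]
          · intro b _ hb
            have : ¬ c = (b : Fin K) := by
              intro h; apply hb; exact Subtype.ext h.symm
            simp [hM, this]
          · intro h; exact absurd (Finset.mem_univ _) h
        rw [h1, h2, add_neg_cancel]
    have hu0 : ∀ p, u p = 0 := by
      apply hLI' u
      funext c
      simpa using hsum c
    apply hv0
    funext i
    exact hu0 (Sum.inl i)
  -- from det ≠ 0, find a permutation with nonzero entries
  have hperm : ∃ π : Equiv.Perm {k : Fin K // k ∈ S}, ∀ i, D (π i) i ≠ 0 := by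
    by_contra h
    push_neg at h
    apply hdet
    rw [Matrix.det_apply]
    apply Finset.sum_eq_zero
    intro π _
    obtain ⟨i, hi⟩ := h π
    have hp : ∏ j, D (π j) j = 0 := Finset.prod_eq_zero (Finset.mem_univ i) hi
    rw [hp, smul_zero]
  obtain ⟨π, hπ⟩ := hperm
  refine ⟨π.symm.trans eST, fun j => ?_⟩
  have := hπ (π.symm j)
  simpa [D] using this
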